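/- Let X, Y be fuzzy strong φ-b-normed linear spaces (same φ and K) with the t-norm *₂ of Y lower semi-continuous. If Y is l-fuzzy complete, then BF(X,Y), the space of fuzzy bounded linear operators equipped with the operator fuzzy norm N(T,s) = sup{α ∈ (0,1) : sup_{x≠0} inf{t/d_{1−α}(x) : t>0, N₂(Tx,t) ≥ α} ≤ s}, is l-fuzzy complete: every sequence (Tₙ) with lim_{m,n→∞} inf{t>0 : N(Tₘ − Tₙ, t) > 1−α} = 0 for all α ∈ (0,1) is l-fuzzy convergent to some T ∈ BF(X,Y). -/

import Mathlib

open Filter Topology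

structure PhiFun (φ : ℝ → ℝ) : Prop where
  even : ∀ t, φ (-t) = φ t
  one : φ 1 = 1
  strictMono : StrictMonoOn φ (Set.Ioi 0)
  contOn : ContinuousOn φ (Set.Ioi 0)
  tendsto_zero : Tendsto φ (nhdsWithin 0 (Set.Ioi 0)) (nhds 0)
  tendsto_atTop : Tendsto φ atTop atTop

structure IsTNorm (star : ℝ → ℝ → ℝ) : Prop where
  mem : ∀ a ∈ Set.Icc (0:ℝ) 1, ∀ b ∈ Set.Icc (0:ℝ) 1, star a b ∈ Set.Icc (0:ℝ) 1
  assoc : ∀ a b c, star (star a b) c = star a (star b c)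
  comm : ∀ a b, star a b = star b a
  one_right : ∀ a ∈ Set.Icc (0:ℝ) 1, star a 1 = a
  mono : ∀ a b c d, a ≤ b → c ≤ d → star a c ≤ star b d

structure IsFuzzyPhiBNorm {X : Type*} [AddCommGroup X] [Module ℝ X]
    (N : X → ℝ → ℝ) (φ : ℝ → ℝ) (K : ℝ) (star : ℝ → ℝ → ℝ) : Prop where
  one_le_K : 1 ≤ K
  phi : PhiFun φ
  tnorm : IsTNorm star
  mem : ∀ x t, N x t ∈ Set.Icc (0:ℝ) 1
  bN1 : ∀ x : X, ∀ t ≤ (0:ℝ), N x t = 0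
  bN2 : ∀ x : X, (∀ t > (0:ℝ), N x t = 1) ↔ x = 0
  bN3 : ∀ (c : ℝ) (x : X), ∀ t > (0:ℝ), φ c ≠ 0 → N (c • x) t = N x (t / φ c)
  bN4 : ∀ (x y : X) (s t : ℝ), star (N x s) (N y t) ≤ N (x + y) (s + K * t)
  bN5 : ∀ x : X, Monotone (N x) ∧ Tendsto (N x) atTop (nhds 1)

noncomputable def FuzzyBounded {X Y : Type*} [AddCommGroup X] [Module ℝ X]
    [AddCommGroup Y] [Module ℝ Y]
    (N1 : X → ℝ → ℝ) (N2 : Y → ℝ → ℝ) (K : ℝ) (T : X →ₗ[ℝ] Y) : Prop :=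
  ∀ α ∈ Set.Ioo (0:ℝ) 1, ∃ M > (0:ℝ), ∀ x : X,
    sInf {t | 0 < t ∧ α ≤ N2 (T x) (K * t)} ≤ M * sInf {t | 0 < t ∧ 1 - α ≤ N1 x t}

noncomputable def dd {X : Type*} [AddCommGroup X] [Module ℝ X]
    (N1 : X → ℝ → ℝ) (α : ℝ) (x : X) : ℝ :=
  sInf {t | 0 < t ∧ 1 - α ≤ N1 x t}

noncomputable def opSup {X Y : Type*} [AddCommGroup X] [Module ℝ X]
    [AddCommGroup Y] [Module ℝ Y]
    (N1 : X → ℝ → ℝ) (N2 : Y → ℝ → ℝ) (T : X →ₗ[ℝ] Y) (α : ℝ) : ℝ :=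
  sSup {r | ∃ x : X, x ≠ 0 ∧
    r = sInf ((fun t => t / dd N1 α x) '' {t | 0 < t ∧ α ≤ N2 (T x) t})}

open scoped Classical in
noncomputable def opN {X Y : Type*} [AddCommGroup X] [Module ℝ X]
    [AddCommGroup Y] [Module ℝ Y]
    (N1 : X → ℝ → ℝ) (N2 : Y → ℝ → ℝ) (T : X →ₗ[ℝ] Y) (s : ℝ) : ℝ :=
  if T = 0 ∧ s = 0 then 0
  else sSup {α | α ∈ Set.Ioo (0:ℝ) 1 ∧ opSup N1 N2 T α ≤ s}


set_option linter.unusedSectionVars false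
set_option linter.unusedVariables false
set_option linter.unnecessarySimpa false

/-- strict version -/
noncomputable def nd {Y : Type*} [AddCommGroup Y] [Module ℝ Y]
    (N : Y → ℝ → ℝ) (γ : ℝ) (y : Y) : ℝ :=
  sInf {t | 0 < t ∧ γ < N y t}

section Basic
variable {Y : Type*} [AddCommGroup Y] [Module ℝ Y]
variable {N : Y → ℝ → ℝ} {φ : ℝ → ℝ} {K : ℝ} {star : ℝ → ℝ → ℝ}
variable (hN : IsFuzzyPhiBNorm N φ K star)

lemma phi_pos (hφ : PhiFun φ) {c : ℝ} (hc : c ≠ 0) : 0 < φ c := by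
  -- reduce to c > 0
  have key : ∀ c' : ℝ, 0 < c' → 0 < φ c' := by
    intro c' hc'
    by_contra h
    push_neg at h
    have h2 : φ (c'/2) < 0 := lt_of_lt_of_le
      (hφ.strictMono (Set.mem_Ioi.2 (by linarith)) (Set.mem_Ioi.2 hc') (by linarith)) h
    have hev : ∀ᶠ t in nhdsWithin 0 (Set.Ioi 0), φ (c'/2) < φ t :=
      hφ.tendsto_zero.eventually (eventually_gt_nhds h2)
    have hev2 : ∀ᶠ t in nhdsWithin 0 (Set.Ioi 0), φ t < φ (c'/2) := by
      filter_upwards [self_mem_nhdsWithin,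
        eventually_nhdsWithin_of_eventually_nhds
          (eventually_lt_nhds (show (0:ℝ) < c'/2 by linarith))] with t ht1 ht2
      exact hφ.strictMono (Set.mem_Ioi.2 ht1) (Set.mem_Ioi.2 (by linarith)) ht2
    obtain ⟨t, h1, h2⟩ := (hev.and hev2).exists
    linarith
  rcases lt_or_gt_of_ne hc with h | h
  · have := key (-c) (by linarith)
    rwa [hφ.even] at this
  · exact key c h

include hN

lemma ndSet_nonempty {γ : ℝ} (hγ : γ < 1) (y : Y) :
    {t | 0 < t ∧ γ < N y t}.Nonempty := by
  have h1 : ∀ᶠ t in atTop, γ < N y t :=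
    (hN.bN5 y).2.eventually (eventually_gt_nhds hγ)
  obtain ⟨t, h2, h3⟩ := ((eventually_gt_atTop (0:ℝ)).and h1).exists
  exact ⟨t, h2, h3⟩

lemma ddSet_nonempty {α : ℝ} (hα : 0 < α) (y : Y) :
    {t | 0 < t ∧ 1 - α ≤ N y t}.Nonempty := by
  obtain ⟨t, h1, h2⟩ := ndSet_nonempty hN (show 1 - α < 1 by linarith) y
  exact ⟨t, h1, le_of_lt h2⟩

lemma nd_nonneg (γ : ℝ) (y : Y) : 0 ≤ nd N γ y :=
  Real.sInf_nonneg (fun _ hx => le_of_lt hx.1)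

lemma dd_nonneg' (α : ℝ) (y : Y) : 0 ≤ dd N α y :=
  Real.sInf_nonneg (fun _ hx => le_of_lt hx.1)

lemma nd_le {γ u : ℝ} {y : Y} (hu : 0 < u) (h : γ < N y u) : nd N γ y ≤ u :=
  csInf_le ⟨0, fun _ hx => le_of_lt hx.1⟩ ⟨hu, h⟩

lemma dd_le {α u : ℝ} {y : Y} (hu : 0 < u) (h : 1 - α ≤ N y u) : dd N α y ≤ u :=
  csInf_le ⟨0, fun _ hx => le_of_lt hx.1⟩ ⟨hu, h⟩

lemma lt_of_nd_lt {γ u : ℝ} {y : Y} (hγ : γ < 1) (hu : 0 < u)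
    (h : nd N γ y < u) : γ < N y u := by
  obtain ⟨t, ⟨ht0, htγ⟩, htu⟩ := exists_lt_of_csInf_lt (ndSet_nonempty hN hγ y) h
  exact lt_of_lt_of_le htγ ((hN.bN5 y).1 (le_of_lt htu))

lemma le_of_dd_lt {α u : ℝ} {y : Y} (hα : 0 < α) (hu : 0 < u)
    (h : dd N α y < u) : 1 - α ≤ N y u := by
  obtain ⟨t, ⟨ht0, htγ⟩, htu⟩ := exists_lt_of_csInf_lt (ddSet_nonempty hN hα y) h
  exact le_trans htγ ((hN.bN5 y).1 (le_of_lt htu))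

lemma dd_anti {α α' : ℝ} (hα : 0 < α) (h : α ≤ α') (y : Y) :
    dd N α' y ≤ dd N α y :=
  csInf_le_csInf ⟨0, fun _ hx => le_of_lt hx.1⟩ (ddSet_nonempty hN hα y)
    (fun t ht => ⟨ht.1, le_trans (by linarith) ht.2⟩)

/-- nd at level γ is at most dd at level 1-β when γ < β -/
lemma nd_le_dd {γ β : ℝ} (hγβ : γ < β) (hβ : 0 < 1 - β) (y : Y) :
    nd N γ y ≤ dd N (1 - β) y := by
  apply csInf_le_csInf ⟨0, fun _ hx => le_of_lt hx.1⟩ (ddSet_nonempty hN hβ y)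
  intro t ht
  exact ⟨ht.1, lt_of_lt_of_le hγβ (by have := ht.2; linarith [ht.2])⟩

lemma N_neg (y : Y) (t : ℝ) : N (-y) t = N y t := by
  rcases le_or_gt t 0 with h | h
  · rw [hN.bN1 _ _ h, hN.bN1 _ _ h]
  · have hφ1 : φ (-1) = 1 := by rw [hN.phi.even, hN.phi.one]
    have := hN.bN3 (-1) y t h (by rw [hφ1]; norm_num)
    rw [neg_one_smul] at this
    rw [this, hφ1, div_one]

lemma nd_neg (γ : ℝ) (y : Y) : nd N γ (-y) = nd N γ y := by
  unfold nd; congr 1; ext t; simp [N_neg hN]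

lemma N_zero {t : ℝ} (ht : 0 < t) : N 0 t = 1 := ((hN.bN2 0).2 rfl) t ht

lemma nd_zero {γ : ℝ} (hγ : γ < 1) : nd N γ (0 : Y) = 0 := by
  have : {t | 0 < t ∧ γ < N 0 t} = Set.Ioi 0 := by
    ext t; simp only [Set.mem_setOf_eq, Set.mem_Ioi]
    constructor
    · exact fun h => h.1
    · intro h; exact ⟨h, by rw [N_zero hN h]; exact hγ⟩
  rw [nd, this, csInf_Ioi]

lemma dd_zero {α : ℝ} (hα : 0 < α) : dd N α (0 : Y) = 0 := by
  have : {t | 0 < t ∧ 1 - α ≤ N (0:Y) t} = Set.Ioi 0 := by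
    ext t; simp only [Set.mem_setOf_eq, Set.mem_Ioi]
    constructor
    · exact fun h => h.1
    · intro h; exact ⟨h, by rw [N_zero hN h]; linarith⟩
  rw [dd, this, csInf_Ioi]

lemma K_pos : 0 < K := lt_of_lt_of_le one_pos hN.one_le_K

lemma nd_add_le {γ γ' : ℝ} (hγ' : γ' < 1) (hst : γ < star γ' γ') (y z : Y) :
    nd N γ (y + z) ≤ nd N γ' y + K * nd N γ' z := by
  have hK := K_pos hN
  apply le_of_forall_pos_le_add
  intro ε hε
  obtain ⟨s, ⟨hs0, hsγ⟩, hs⟩ := exists_lt_of_csInf_lt (ndSet_nonempty hN hγ' y)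
    (show nd N γ' y < nd N γ' y + ε/2 from lt_add_of_pos_right _ (by linarith))
  obtain ⟨t, ⟨ht0, htγ⟩, ht⟩ := exists_lt_of_csInf_lt (ndSet_nonempty hN hγ' z)
    (show nd N γ' z < nd N γ' z + ε/(2*K) from lt_add_of_pos_right _ (by positivity))
  have hmem : γ < N (y + z) (s + K * t) := by
    calc γ < star γ' γ' := hst
    _ ≤ star (N y s) (N z t) := hN.tnorm.mono _ _ _ _ (le_of_lt hsγ) (le_of_lt htγ)
    _ ≤ N (y + z) (s + K * t) := hN.bN4 y z s t
  have := nd_le hN (by positivity) hmem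
  have hKt : K * t ≤ K * (nd N γ' z) + ε/2 := by
    have : K * t < K * (nd N γ' z + ε/(2*K)) := by
      exact (mul_lt_mul_iff_right₀ hK).2 ht
    rw [mul_add] at this
    have hKe : K * (ε / (2*K)) = ε/2 := by field_simp
    linarith [this, hKe.le]
  linarith

lemma nd_smul_le {γ c : ℝ} (hγ : γ < 1) (hc : c ≠ 0) (y : Y) :
    nd N γ (c • y) ≤ φ c * nd N γ y := by
  have hφc := phi_pos hN.phi hc
  apply le_of_forall_pos_le_add
  intro ε hε
  obtain ⟨t, ⟨ht0, htγ⟩, ht⟩ := exists_lt_of_csInf_lt (ndSet_nonempty hN hγ y)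
    (show nd N γ y < nd N γ y + ε/(φ c) from lt_add_of_pos_right _ (by positivity))
  have hmem : γ < N (c • y) (φ c * t) := by
    rw [hN.bN3 c y _ (by positivity) (ne_of_gt hφc)]
    have h3 : φ c * t / φ c = t := by field_simp
    rw [h3]; exact htγ
  have := nd_le hN (by positivity) hmem
  have h2 : φ c * t < φ c * (nd N γ y + ε/(φ c)) := (mul_lt_mul_iff_right₀ hφc).2 ht
  rw [mul_add] at h2
  have : φ c * (ε / φ c) = ε := by field_simp
  linarith

end Basic

section EE
variable {Y : Type*} [AddCommGroup Y] [Module ℝ Y]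
variable {N : Y → ℝ → ℝ} {φ : ℝ → ℝ} {K : ℝ} {star : ℝ → ℝ → ℝ}

/-- non-strict version -/
noncomputable def ee (N : Y → ℝ → ℝ) (β : ℝ) (y : Y) : ℝ :=
  sInf {t | 0 < t ∧ β ≤ N y t}

lemma dd_eq_ee (α : ℝ) (y : Y) : dd N α y = ee N (1 - α) y := rfl

variable (hN : IsFuzzyPhiBNorm N φ K star)
include hN

lemma eeSet_nonempty {β : ℝ} (hβ : β < 1) (y : Y) :
    {t | 0 < t ∧ β ≤ N y t}.Nonempty := by
  obtain ⟨t, h1, h2⟩ := ndSet_nonempty hN hβ y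
  exact ⟨t, h1, le_of_lt h2⟩

omit hN in
lemma ee_nonneg (β : ℝ) (y : Y) : 0 ≤ ee N β y :=
  Real.sInf_nonneg (fun _ hx => le_of_lt hx.1)

omit hN in
lemma ee_le {β u : ℝ} {y : Y} (hu : 0 < u) (h : β ≤ N y u) : ee N β y ≤ u :=
  csInf_le ⟨0, fun _ hx => le_of_lt hx.1⟩ ⟨hu, h⟩

lemma le_of_ee_lt {β u : ℝ} {y : Y} (hβ : β < 1) (hu : 0 < u)
    (h : ee N β y < u) : β ≤ N y u := by
  obtain ⟨t, ⟨ht0, htγ⟩, htu⟩ := exists_lt_of_csInf_lt (eeSet_nonempty hN hβ y) h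
  exact le_trans htγ ((hN.bN5 y).1 (le_of_lt htu))

lemma nd_le_ee {γ β : ℝ} (hγβ : γ < β) (hβ : β < 1) (y : Y) :
    nd N γ y ≤ ee N β y := by
  apply csInf_le_csInf ⟨0, fun _ hx => le_of_lt hx.1⟩ (eeSet_nonempty hN hβ y)
  intro t ht
  exact ⟨ht.1, lt_of_lt_of_le hγβ ht.2⟩

lemma ee_le_nd {γ β : ℝ} (hγβ : β ≤ γ) (hγ : γ < 1) (y : Y) :
    ee N β y ≤ nd N γ y := by
  apply csInf_le_csInf ⟨0, fun _ hx => le_of_lt hx.1⟩ (ndSet_nonempty hN hγ y)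
  intro t ht
  exact ⟨ht.1, le_trans hγβ (le_of_lt ht.2)⟩

lemma ee_anti {β β' : ℝ} (hβ' : β' < 1) (h : β ≤ β') (y : Y) :
    ee N β y ≤ ee N β' y :=
  csInf_le_csInf ⟨0, fun _ hx => le_of_lt hx.1⟩ (eeSet_nonempty hN hβ' y)
    (fun t ht => ⟨ht.1, le_trans h ht.2⟩)

/-- the scaled infimum controls `ee` -/
lemma ee_le_K_mul {β c : ℝ} {y : Y} (hβ : β < 1)
    (h : sInf {t | 0 < t ∧ β ≤ N y (K * t)} ≤ c) : ee N β y ≤ K * c := by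
  have hK := K_pos hN
  have hne : {t | 0 < t ∧ β ≤ N y (K * t)}.Nonempty := by
    obtain ⟨t, h1, h2⟩ := eeSet_nonempty hN hβ y
    exact ⟨t / K, by positivity, by rwa [mul_div_cancel₀ _ (ne_of_gt hK)]⟩
  apply le_of_forall_pos_le_add
  intro ε hε
  obtain ⟨t, ⟨ht0, htβ⟩, htc⟩ := exists_lt_of_csInf_lt hne
    (lt_of_le_of_lt h (show c < c + ε / K from lt_add_of_pos_right _ (by positivity)))
  calc ee N β y ≤ K * t := ee_le (by positivity) htβ
  _ ≤ K * (c + ε / K) := by nlinarith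
  _ = K * c + ε := by field_simp

lemma sInfK_le {β c : ℝ} {y : Y} (hβ : β < 1) (hc : 0 ≤ c)
    (h : ee N β y ≤ K * c) : sInf {t | 0 < t ∧ β ≤ N y (K * t)} ≤ c := by
  have hK := K_pos hN
  apply le_of_forall_pos_le_add
  intro ε hε
  have h2 : ee N β y < K * (c + ε) := by nlinarith
  have h3 : β ≤ N y (K * (c + ε)) := le_of_ee_lt hN hβ (by positivity) h2
  exact csInf_le ⟨0, fun _ hx => le_of_lt hx.1⟩ ⟨by positivity, h3⟩

end EE

lemma sInf_div_image {D : ℝ} (hD : 0 < D) (A : Set ℝ) :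
    sInf ((fun t => t / D) '' A) = sInf A / D := by
  have h1 : (fun t : ℝ => t / D) = (fun t : ℝ => D⁻¹ • t) := by
    funext t; simp [div_eq_inv_mul, smul_eq_mul]
  rw [h1, Set.image_smul, Real.sInf_smul_of_nonneg (by positivity), smul_eq_mul,
    inv_mul_eq_div]

lemma sInf_add_K_le {K : ℝ} {A B C : Set ℝ} (hA : A.Nonempty) (hB : B.Nonempty)
    (hK : 0 < K) (h : ∀ s ∈ A, ∀ t ∈ B, sInf C ≤ s + K * t) :
    sInf C ≤ sInf A + K * sInf B := by
  apply le_of_forall_pos_le_add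
  intro ε hε
  obtain ⟨s, hs, hs2⟩ := exists_lt_of_csInf_lt hA
    (show sInf A < sInf A + ε / 2 by linarith)
  obtain ⟨t, ht, ht2⟩ := exists_lt_of_csInf_lt hB
    (show sInf B < sInf B + ε / (2 * K) from lt_add_of_pos_right _ (by positivity))
  calc sInf C ≤ s + K * t := h s hs t ht
  _ ≤ sInf A + ε / 2 + K * (sInf B + ε / (2 * K)) := by nlinarith
  _ = sInf A + K * sInf B + ε := by field_simp; ring


section TwoSpace
variable {X Y : Type*} [AddCommGroup X] [Module ℝ X] [AddCommGroup Y] [Module ℝ Y]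
variable {N1 : X → ℝ → ℝ} {N2 : Y → ℝ → ℝ} {φ : ℝ → ℝ} {K : ℝ}
variable {star1 star2 : ℝ → ℝ → ℝ}
variable (hN1 : IsFuzzyPhiBNorm N1 φ K star1) (hN2 : IsFuzzyPhiBNorm N2 φ K star2)
variable (hN6 : ∀ x : X, x ≠ 0 → ∀ α ∈ Set.Ioo (0:ℝ) 1, 0 < dd N1 α x)
include hN1 hN2 hN6

-- note dd N1 α x = sInf {t | 0 < t ∧ 1 - α ≤ N1 x t} definitionally

lemma opSup_le {α c : ℝ} {U : X →ₗ[ℝ] Y} (hα : α ∈ Set.Ioo (0:ℝ) 1) (hc : 0 ≤ c)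
    (h : ∀ x, x ≠ 0 → ee N2 α (U x) ≤ c * dd N1 α x) :
    opSup N1 N2 U α ≤ c := by
  apply Real.sSup_le _ hc
  rintro r ⟨x, hx, rfl⟩
  have hD := hN6 x hx α hα
  rw [sInf_div_image hD]
  rw [div_le_iff₀ hD]
  calc sInf {t | 0 < t ∧ α ≤ N2 (U x) t} = ee N2 α (U x) := rfl
  _ ≤ c * dd N1 α x := h x hx

lemma ee_le_of_opSup_le {α s : ℝ} {U : X →ₗ[ℝ] Y} (hα : α ∈ Set.Ioo (0:ℝ) 1)
    (hU : FuzzyBounded N1 N2 K U) (h : opSup N1 N2 U α ≤ s) {x : X} (hx : x ≠ 0) :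
    ee N2 α (U x) ≤ s * dd N1 α x := by
  obtain ⟨M, hM0, hMb⟩ := hU α hα
  have hK := K_pos hN2
  have hbdd : BddAbove {r | ∃ x : X, x ≠ 0 ∧
      r = sInf ((fun t => t / dd N1 α x) '' {t | 0 < t ∧ α ≤ N2 (U x) t})} := by
    refine ⟨K * M, ?_⟩
    rintro r ⟨x', hx', rfl⟩
    have hD := hN6 x' hx' α hα
    rw [sInf_div_image hD, div_le_iff₀ hD]
    have h1 : ee N2 α (U x') ≤ K * (M * dd N1 α x') := ee_le_K_mul hN2 hα.2 (hMb x')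
    calc sInf {t | 0 < t ∧ α ≤ N2 (U x') t} = ee N2 α (U x') := rfl
    _ ≤ K * (M * dd N1 α x') := h1
    _ = K * M * dd N1 α x' := by ring
  have hD := hN6 x hx α hα
  have hmem : ee N2 α (U x) / dd N1 α x ∈ {r | ∃ x : X, x ≠ 0 ∧
      r = sInf ((fun t => t / dd N1 α x) '' {t | 0 < t ∧ α ≤ N2 (U x) t})} :=
    ⟨x, hx, by rw [sInf_div_image hD]; rfl⟩
  have := (le_csSup hbdd hmem).trans h
  rwa [div_le_iff₀ hD] at this

lemma key1 {α s : ℝ} {U : X →ₗ[ℝ] Y} (hU : FuzzyBounded N1 N2 K U)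
    (hα : α ∈ Set.Ioo (0:ℝ) 1) (hs : 0 < s) (h : 1 - α < opN N1 N2 U s) (x : X) :
    nd N2 (1 - α) (U x) ≤ s * dd N1 (1 - α) x := by
  have hα1 : 0 < 1 - α := by linarith [hα.2]
  rw [opN, if_neg (fun hh => hs.ne' hh.2)] at h
  have hne : {β | β ∈ Set.Ioo (0:ℝ) 1 ∧ opSup N1 N2 U β ≤ s}.Nonempty := by
    by_contra h'
    rw [Set.not_nonempty_iff_eq_empty] at h'
    rw [h', Real.sSup_empty] at h
    linarith
  obtain ⟨α', ⟨hα'Ioo, hα'le⟩, hα'gt⟩ := exists_lt_of_lt_csSup hne h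
  rcases eq_or_ne x 0 with rfl | hx
  · rw [map_zero, nd_zero hN2 (by linarith [hα.1])]
    exact mul_nonneg hs.le (dd_nonneg' hN1 _ _)
  · have h1 := ee_le_of_opSup_le hN1 hN2 hN6 hα'Ioo hU hα'le hx
    calc nd N2 (1 - α) (U x) ≤ ee N2 α' (U x) := nd_le_ee hN2 hα'gt hα'Ioo.2 _
    _ ≤ s * dd N1 α' x := h1
    _ ≤ s * dd N1 (1 - α) x :=
      mul_le_mul_of_nonneg_left (dd_anti hN1 hα1 hα'gt.le x) hs.le

lemma opN_ge {α' t : ℝ} {U : X →ₗ[ℝ] Y} (hα' : α' ∈ Set.Ioo (0:ℝ) 1) (ht : t ≠ 0)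
    (h : opSup N1 N2 U α' ≤ t) : α' ≤ opN N1 N2 U t := by
  rw [opN, if_neg (fun hh => ht hh.2)]
  exact le_csSup ⟨1, fun β hβ => hβ.1.2.le⟩ ⟨hα', h⟩

lemma FB_neg {U : X →ₗ[ℝ] Y} (hU : FuzzyBounded N1 N2 K U) :
    FuzzyBounded N1 N2 K (-U) := by
  intro α hα
  obtain ⟨M, hM0, hMb⟩ := hU α hα
  refine ⟨M, hM0, fun x => ?_⟩
  have hset : {t | 0 < t ∧ α ≤ N2 ((-U) x) (K * t)} =
      {t | 0 < t ∧ α ≤ N2 (U x) (K * t)} := by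
    ext t
    rw [Set.mem_setOf_eq, Set.mem_setOf_eq, LinearMap.neg_apply, N_neg hN2]
  rw [hset]
  exact hMb x

lemma FB_add (hex : ∀ γ ∈ Set.Ioo (0:ℝ) 1, ∃ δ ∈ Set.Ioo (0:ℝ) 1,
      γ < star2 δ δ ∧ γ < δ)
    {U V : X →ₗ[ℝ] Y} (hU : FuzzyBounded N1 N2 K U) (hV : FuzzyBounded N1 N2 K V) :
    FuzzyBounded N1 N2 K (U + V) := by
  intro α hα
  have hK := K_pos hN2
  obtain ⟨δ, hδ, hst, hαδ⟩ := hex α hα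
  obtain ⟨M1, hM10, hb1⟩ := hU δ hδ
  obtain ⟨M2, hM20, hb2⟩ := hV δ hδ
  refine ⟨M1 + K * M2, by nlinarith, fun x => ?_⟩
  have hAne : {t | 0 < t ∧ δ ≤ N2 (U x) (K * t)}.Nonempty := by
    obtain ⟨t, h1, h2⟩ := eeSet_nonempty hN2 hδ.2 (U x)
    exact ⟨t / K, by positivity, by rwa [mul_div_cancel₀ _ (ne_of_gt hK)]⟩
  have hBne : {t | 0 < t ∧ δ ≤ N2 (V x) (K * t)}.Nonempty := by
    obtain ⟨t, h1, h2⟩ := eeSet_nonempty hN2 hδ.2 (V x)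
    exact ⟨t / K, by positivity, by rwa [mul_div_cancel₀ _ (ne_of_gt hK)]⟩
  have step : ∀ s ∈ {t | 0 < t ∧ δ ≤ N2 (U x) (K * t)},
      ∀ t ∈ {t | 0 < t ∧ δ ≤ N2 (V x) (K * t)},
      sInf {t | 0 < t ∧ α ≤ N2 ((U + V) x) (K * t)} ≤ s + K * t := by
    rintro s ⟨hs0, hsδ⟩ t ⟨ht0, htδ⟩
    apply csInf_le ⟨0, fun _ hx => le_of_lt hx.1⟩
    refine ⟨by positivity, ?_⟩
    have h4 : star2 (N2 (U x) (K * s)) (N2 (V x) (K * t)) ≤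
        N2 (U x + V x) (K * s + K * (K * t)) := hN2.bN4 (U x) (V x) (K * s) (K * t)
    have h5 : star2 δ δ ≤ star2 (N2 (U x) (K * s)) (N2 (V x) (K * t)) :=
      hN2.tnorm.mono _ _ _ _ hsδ htδ
    have h6 : K * (s + K * t) = K * s + K * (K * t) := by ring
    rw [LinearMap.add_apply, h6]
    linarith
  calc sInf {t | 0 < t ∧ α ≤ N2 ((U + V) x) (K * t)}
      ≤ sInf {t | 0 < t ∧ δ ≤ N2 (U x) (K * t)} +
        K * sInf {t | 0 < t ∧ δ ≤ N2 (V x) (K * t)} :=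
        sInf_add_K_le hAne hBne hK step
  _ ≤ M1 * dd N1 δ x + K * (M2 * dd N1 δ x) := by
      have e : sInf {t | 0 < t ∧ 1 - δ ≤ N1 x t} = dd N1 δ x := rfl
      have h1 := hb1 x; have h2 := hb2 x
      rw [e] at h1 h2
      nlinarith
  _ = (M1 + K * M2) * dd N1 δ x := by ring
  _ ≤ (M1 + K * M2) * dd N1 α x :=
      mul_le_mul_of_nonneg_left (dd_anti hN1 hα.1 hαδ.le x) (by nlinarith)

lemma FB_sub (hex : ∀ γ ∈ Set.Ioo (0:ℝ) 1, ∃ δ ∈ Set.Ioo (0:ℝ) 1,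
      γ < star2 δ δ ∧ γ < δ)
    {U V : X →ₗ[ℝ] Y} (hU : FuzzyBounded N1 N2 K U) (hV : FuzzyBounded N1 N2 K V) :
    FuzzyBounded N1 N2 K (U - V) := by
  rw [sub_eq_add_neg]
  exact FB_add hN1 hN2 hN6 hex hU (FB_neg hN1 hN2 hN6 hV)

lemma opNset_nonempty {α : ℝ} {U : X →ₗ[ℝ] Y} (hU : FuzzyBounded N1 N2 K U)
    (hα : α ∈ Set.Ioo (0:ℝ) 1) :
    {t | 0 < t ∧ 1 - α < opN N1 N2 U t}.Nonempty := by
  have hK := K_pos hN2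
  have hβ : (1 - α / 2) ∈ Set.Ioo (0:ℝ) 1 := ⟨by linarith [hα.2], by linarith [hα.1]⟩
  obtain ⟨M, hM0, hb⟩ := hU _ hβ
  have hop : opSup N1 N2 U (1 - α / 2) ≤ K * M := by
    apply opSup_le hN1 hN2 hN6 hβ (by positivity)
    intro x hx
    calc ee N2 (1 - α / 2) (U x) ≤ K * (M * dd N1 (1 - α / 2) x) :=
      ee_le_K_mul hN2 hβ.2 (hb x)
    _ = K * M * dd N1 (1 - α / 2) x := by ring
  refine ⟨K * M + 1, by positivity, ?_⟩
  have h2 : (1 - α / 2 : ℝ) ≤ opN N1 N2 U (K * M + 1) :=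
    opN_ge hN1 hN2 hN6 hβ (ne_of_gt (by positivity)) (hop.trans (by linarith))
  linarith [hα.1]

end TwoSpace

set_option maxHeartbeats 1000000 in
theorem stmt14 {X Y : Type*} [AddCommGroup X] [Module ℝ X] [AddCommGroup Y] [Module ℝ Y]
    (N1 : X → ℝ → ℝ) (N2 : Y → ℝ → ℝ) (φ : ℝ → ℝ) (K : ℝ)
    (star1 star2 : ℝ → ℝ → ℝ)
    (hN1 : IsFuzzyPhiBNorm N1 φ K star1) (hN2 : IsFuzzyPhiBNorm N2 φ K star2)
    (hN6 : ∀ x : X, x ≠ 0 → ∀ α ∈ Set.Ioo (0:ℝ) 1, 0 < dd N1 α x)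
    (hlsc : ∀ β ∈ Set.Ioo (0:ℝ) 1, ∃ α ∈ Set.Ioo (0:ℝ) 1,
        1 - β < star2 (1 - α) (1 - α))
    (hYcomplete : ∀ ys : ℕ → Y,
      (∀ α ∈ Set.Ioo (0:ℝ) 1,
        Tendsto (fun p : ℕ × ℕ => sInf {t | 0 < t ∧ 1 - α < N2 (ys p.1 - ys p.2) t})
          atTop (nhds 0)) →
      ∃ l : Y, ∀ α ∈ Set.Ioo (0:ℝ) 1,
        Tendsto (fun n => sInf {t | 0 < t ∧ 1 - α < N2 (ys n - l) t}) atTop (nhds 0))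
    (T : ℕ → X →ₗ[ℝ] Y) (hTb : ∀ n, FuzzyBounded N1 N2 K (T n))
    (hCauchy : ∀ α ∈ Set.Ioo (0:ℝ) 1,
      Tendsto (fun p : ℕ × ℕ => sInf {t | 0 < t ∧ 1 - α < opN N1 N2 (T p.1 - T p.2) t})
        atTop (nhds 0)) :
    ∃ S : X →ₗ[ℝ] Y, FuzzyBounded N1 N2 K S ∧
      ∀ α ∈ Set.Ioo (0:ℝ) 1,
        Tendsto (fun n => sInf {t | 0 < t ∧ 1 - α < opN N1 N2 (T n - S) t}) atTop (nhds 0) := by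
  classical
  have hK : 0 < K := K_pos hN2
  -- lower semicontinuity reformulated
  have hex : ∀ γ ∈ Set.Ioo (0:ℝ) 1, ∃ δ ∈ Set.Ioo (0:ℝ) 1, γ < star2 δ δ ∧ γ < δ := by
    intro γ hγ
    obtain ⟨a, ha, hst⟩ := hlsc (1 - γ) ⟨by linarith [hγ.2], by linarith [hγ.1]⟩
    have hst' : γ < star2 (1 - a) (1 - a) := by
      have : (1:ℝ) - (1 - γ) = γ := by ring
      rwa [this] at hst
    have hmem : (1 - a) ∈ Set.Icc (0:ℝ) 1 := ⟨by linarith [ha.2], by linarith [ha.1]⟩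
    have h1 : star2 (1 - a) (1 - a) ≤ 1 - a := by
      calc star2 (1 - a) (1 - a) ≤ star2 (1 - a) 1 :=
        hN2.tnorm.mono _ _ _ _ le_rfl (by linarith [ha.1])
      _ = 1 - a := hN2.tnorm.one_right _ hmem
    exact ⟨1 - a, ⟨by linarith [ha.2], by linarith [ha.1]⟩, hst', by linarith⟩
  have hFBd : ∀ m n, FuzzyBounded N1 N2 K (T m - T n) :=
    fun m n => FB_sub hN1 hN2 hN6 hex (hTb m) (hTb n)
  -- quantitative Cauchy property
  have hC2 : ∀ δ ∈ Set.Ioo (0:ℝ) 1, ∀ ε > (0:ℝ), ∃ Nn : ℕ, ∀ m n, Nn ≤ m → Nn ≤ n →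
      ∃ s, 0 < s ∧ s ≤ ε ∧ ∀ x, nd N2 δ ((T m - T n) x) ≤ s * dd N1 δ x := by
    intro δ hδ ε hε
    have hδ' : (1 - δ) ∈ Set.Ioo (0:ℝ) 1 := ⟨by linarith [hδ.2], by linarith [hδ.1]⟩
    have h2 : ∀ᶠ p : ℕ × ℕ in atTop,
        sInf {t | 0 < t ∧ 1 - (1 - δ) < opN N1 N2 (T p.1 - T p.2) t} < ε :=
      (hCauchy (1 - δ) hδ').eventually (eventually_lt_nhds hε)
    rw [eventually_atTop] at h2
    obtain ⟨P, hP⟩ := h2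
    refine ⟨max P.1 P.2, fun m n hm hn => ?_⟩
    have hmn : P ≤ (m, n) :=
      ⟨le_trans (le_max_left _ _) hm, le_trans (le_max_right _ _) hn⟩
    have h3 := hP (m, n) hmn
    have hne := opNset_nonempty hN1 hN2 hN6 (hFBd m n) hδ'
    have e : (1:ℝ) - (1 - δ) = δ := by ring
    rw [e] at h3 hne
    obtain ⟨s, ⟨hs0, hsδ⟩, hsε⟩ := exists_lt_of_csInf_lt hne h3
    refine ⟨s, hs0, hsε.le, fun x => ?_⟩
    have h4 := key1 hN1 hN2 hN6 (hFBd m n) hδ' hs0 (by rwa [e]) x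
    rwa [e] at h4
  -- pointwise Cauchy and limits
  have hpc : ∀ x : X, ∃ l : Y, ∀ α ∈ Set.Ioo (0:ℝ) 1,
      Tendsto (fun n => sInf {t | 0 < t ∧ 1 - α < N2 (T n x - l) t}) atTop (nhds 0) := by
    intro x
    apply hYcomplete (fun n => T n x)
    intro α hα
    have hα' : (1 - α) ∈ Set.Ioo (0:ℝ) 1 := ⟨by linarith [hα.2], by linarith [hα.1]⟩
    rw [Metric.tendsto_nhds]
    intro ε hε
    set C : ℝ := dd N1 (1 - α) x + 1 with hC
    have hC0 : 0 < C := by have := dd_nonneg' hN1 (1 - α) x; linarith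
    obtain ⟨Nn, hNn⟩ := hC2 (1 - α) hα' (ε / (2 * C)) (by positivity)
    rw [eventually_atTop]
    refine ⟨(Nn, Nn), fun p hp => ?_⟩
    obtain ⟨s, hs0, hsε, hsb⟩ := hNn p.1 p.2 hp.1 hp.2
    have h5 := hsb x
    rw [LinearMap.sub_apply] at h5
    have h6 : nd N2 (1 - α) (T p.1 x - T p.2 x) < ε := by
      have hdd : dd N1 (1 - α) x ≤ C := by rw [hC]; linarith
      have hdd0 := dd_nonneg' hN1 (1 - α) x
      calc nd N2 (1 - α) (T p.1 x - T p.2 x) ≤ s * dd N1 (1 - α) x := h5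
      _ ≤ (ε / (2 * C)) * C := by nlinarith
      _ = ε / 2 := by field_simp
      _ < ε := by linarith
    have h7 : (0:ℝ) ≤ nd N2 (1 - α) (T p.1 x - T p.2 x) := nd_nonneg hN2 _ _
    rw [Real.dist_eq, sub_zero]
    calc |sInf {t | 0 < t ∧ 1 - α < N2 (T p.1 x - T p.2 x) t}|
        = |nd N2 (1 - α) (T p.1 x - T p.2 x)| := rfl
    _ = nd N2 (1 - α) (T p.1 x - T p.2 x) := abs_of_nonneg h7
    _ < ε := h6
  choose f hf using hpc
  -- convergence restated with nd at arbitrary levels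
  have hf' : ∀ x : X, ∀ γ ∈ Set.Ioo (0:ℝ) 1,
      Tendsto (fun n => nd N2 γ (T n x - f x)) atTop (nhds 0) := by
    intro x γ hγ
    have h := hf x (1 - γ) ⟨by linarith [hγ.2], by linarith [hγ.1]⟩
    have e : (1:ℝ) - (1 - γ) = γ := by ring
    simpa [e, nd] using h
  -- the submodule of null elements
  set Z : Submodule ℝ Y := {
    carrier := {w | ∀ γ ∈ Set.Ioo (0:ℝ) 1, nd N2 γ w = 0}
    add_mem' := by
      intro a b ha hb γ hγ
      obtain ⟨δ, hδ, hst, hγδ⟩ := hex γ hγ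
      have h1 : nd N2 γ (a + b) ≤ nd N2 δ a + K * nd N2 δ b := nd_add_le hN2 hδ.2 hst a b
      rw [ha δ hδ, hb δ hδ] at h1
      have h2 := nd_nonneg hN2 γ (a + b)
      linarith
    zero_mem' := by
      intro γ hγ
      exact nd_zero hN2 hγ.2
    smul_mem' := by
      intro c w hw γ hγ
      rcases eq_or_ne c 0 with rfl | hc
      · rw [zero_smul]
        exact nd_zero hN2 hγ.2
      · have h1 : nd N2 γ (c • w) ≤ φ c * nd N2 γ w := nd_smul_le hN2 hγ.2 hc w
        rw [hw γ hγ, mul_zero] at h1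
        have h2 := nd_nonneg hN2 γ (c • w)
        linarith } with hZdef
  have hZmem : ∀ w : Y, w ∈ Z ↔ ∀ γ ∈ Set.Ioo (0:ℝ) 1, nd N2 γ w = 0 := fun w => Iff.rfl
  -- a sum of three null-limit sequences has null constant value
  have hnull3 : ∀ (w : Y) (a b c : ℕ → Y),
      (∀ n, a n + (b n + c n) = w) →
      (∀ γ ∈ Set.Ioo (0:ℝ) 1, Tendsto (fun n => nd N2 γ (a n)) atTop (nhds 0)) →
      (∀ γ ∈ Set.Ioo (0:ℝ) 1, Tendsto (fun n => nd N2 γ (b n)) atTop (nhds 0)) →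
      (∀ γ ∈ Set.Ioo (0:ℝ) 1, Tendsto (fun n => nd N2 γ (c n)) atTop (nhds 0)) →
      w ∈ Z := by
    intro w a b c hsum ha hb hc
    rw [hZmem]
    intro γ hγ
    obtain ⟨δ1, hδ1, hst1, _⟩ := hex γ hγ
    obtain ⟨δ2, hδ2, hst2, _⟩ := hex δ1 hδ1
    have key : ∀ ε > (0:ℝ), nd N2 γ w ≤ ε := by
      intro ε hε
      have e1 : ∀ᶠ n in atTop, nd N2 δ1 (a n) < ε / (1 + K + K * K) :=
        (ha δ1 hδ1).eventually (eventually_lt_nhds (by positivity))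
      have e2 : ∀ᶠ n in atTop, nd N2 δ2 (b n) < ε / (1 + K + K * K) :=
        (hb δ2 hδ2).eventually (eventually_lt_nhds (by positivity))
      have e3 : ∀ᶠ n in atTop, nd N2 δ2 (c n) < ε / (1 + K + K * K) :=
        (hc δ2 hδ2).eventually (eventually_lt_nhds (by positivity))
      obtain ⟨n, h1, h2, h3⟩ := (e1.and (e2.and e3)).exists
      have t1 : nd N2 γ w ≤ nd N2 δ1 (a n) + K * nd N2 δ1 (b n + c n) := by
        rw [← hsum n]; exact nd_add_le hN2 hδ1.2 hst1 _ _
      have t2 : nd N2 δ1 (b n + c n) ≤ nd N2 δ2 (b n) + K * nd N2 δ2 (c n) :=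
        nd_add_le hN2 hδ2.2 hst2 _ _
      have hd : (0:ℝ) < 1 + K + K * K := by positivity
      have hKe : K * (ε / (1 + K + K * K)) + K * (K * (ε / (1 + K + K * K)))
          + ε / (1 + K + K * K) = ε := by field_simp; ring
      nlinarith [h1, h2, h3]
    have h0 := nd_nonneg hN2 γ w
    by_contra hne
    have hgt : 0 < nd N2 γ w := lt_of_le_of_ne h0 (Ne.symm hne)
    linarith [key (nd N2 γ w / 2) (by linarith)]
  -- nd is invariant under negation of the argument sequence
  have hfneg : ∀ x : X, ∀ γ ∈ Set.Ioo (0:ℝ) 1,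
      Tendsto (fun n => nd N2 γ (f x - T n x)) atTop (nhds 0) := by
    intro x γ hγ
    have h := hf' x γ hγ
    have e : ∀ n, nd N2 γ (f x - T n x) = nd N2 γ (T n x - f x) := by
      intro n
      rw [← neg_sub (T n x) (f x), nd_neg hN2]
    simpa [e] using h
  -- f is additive modulo Z
  have hfadd : ∀ x y : X, f (x + y) - (f x + f y) ∈ Z := by
    intro x y
    apply hnull3 (f (x + y) - (f x + f y))
      (fun n => f (x + y) - T n (x + y))
      (fun n => T n x - f x) (fun n => T n y - f y)
    · intro n
      have : T n (x + y) = T n x + T n y := map_add (T n) x y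
      rw [this]; abel
    · intro γ hγ; exact hfneg (x + y) γ hγ
    · intro γ hγ; exact hf' x γ hγ
    · intro γ hγ; exact hf' y γ hγ
  -- f is homogeneous modulo Z
  have hfzero : f 0 ∈ Z := by
    apply hnull3 (f 0) (fun n => f 0 - T n 0) (fun _ => (0:Y)) (fun _ => (0:Y))
    · intro n; rw [map_zero]; abel
    · intro γ hγ; exact hfneg 0 γ hγ
    · intro γ hγ; simpa [nd_zero hN2 hγ.2] using tendsto_const_nhds
    · intro γ hγ; simpa [nd_zero hN2 hγ.2] using tendsto_const_nhds
  have hfsmul : ∀ (c : ℝ) (x : X), f (c • x) - c • f x ∈ Z := by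
    intro c x
    rcases eq_or_ne c 0 with rfl | hc
    · simpa using hfzero
    · apply hnull3 (f (c • x) - c • f x)
        (fun n => f (c • x) - T n (c • x))
        (fun n => c • (T n x - f x)) (fun _ => (0:Y))
      · intro n
        have : T n (c • x) = c • T n x := map_smul (T n) c x
        rw [this, smul_sub]; abel
      · intro γ hγ; exact hfneg (c • x) γ hγ
      · intro γ hγ
        have h := hf' x γ hγ
        apply squeeze_zero (fun n => nd_nonneg hN2 _ _)
          (fun n => nd_smul_le hN2 hγ.2 hc (T n x - f x))
        simpa using h.const_mul (φ c)
      · intro γ hγ; simpa [nd_zero hN2 hγ.2] using tendsto_const_nhds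
  -- build the linear limit operator through the quotient
  let G : X →ₗ[ℝ] Y ⧸ Z := {
    toFun := fun x => Submodule.Quotient.mk (f x)
    map_add' := fun x y => by
      rw [← Submodule.Quotient.mk_add]
      exact (Submodule.Quotient.eq Z).2 (hfadd x y)
    map_smul' := fun c x => by
      simp only [RingHom.id_apply]
      rw [← Submodule.Quotient.mk_smul]
      exact (Submodule.Quotient.eq Z).2 (hfsmul c x) }
  obtain ⟨σ, hσ⟩ := Z.mkQ.exists_rightInverse_of_surjective Z.range_mkQ
  set S : X →ₗ[ℝ] Y := σ.comp G with hSdef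
  have hSf : ∀ x, S x - f x ∈ Z := by
    intro x
    have h2 : Z.mkQ (σ (G x)) = G x := LinearMap.congr_fun hσ (G x)
    have h1 : (Submodule.Quotient.mk (S x) : Y ⧸ Z) = Submodule.Quotient.mk (f x) := by
      have hG : G x = Submodule.Quotient.mk (f x) := rfl
      have hS : S x = σ (G x) := rfl
      rw [hS, ← Submodule.mkQ_apply, h2, hG]
    exact (Submodule.Quotient.eq Z).1 h1
  -- convergence of T n x to S x at every level
  have hconv : ∀ x : X, ∀ γ ∈ Set.Ioo (0:ℝ) 1,
      Tendsto (fun n => nd N2 γ (T n x - S x)) atTop (nhds 0) := by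
    intro x γ hγ
    obtain ⟨δ, hδ, hst, _⟩ := hex γ hγ
    have hzero : nd N2 δ (f x - S x) = 0 := by
      have hm : f x - S x ∈ Z := by
        have := Z.neg_mem (hSf x)
        rwa [neg_sub] at this
      exact ((hZmem _).1 hm) δ hδ
    apply squeeze_zero (fun n => nd_nonneg hN2 _ _)
      (g := fun n => nd N2 δ (T n x - f x))
    · intro n
      have h1 : T n x - S x = (T n x - f x) + (f x - S x) := by abel
      calc nd N2 γ (T n x - S x) ≤ nd N2 δ (T n x - f x) + K * nd N2 δ (f x - S x) := by
            rw [h1]; exact nd_add_le hN2 hδ.2 hst _ _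
      _ = nd N2 δ (T n x - f x) := by rw [hzero]; ring
    · exact hf' x δ hδ
  -- uniform approximation of S by T n
  have hUL : ∀ γ ∈ Set.Ioo (0:ℝ) 1, ∃ γ' ∈ Set.Ioo (0:ℝ) 1, γ ≤ γ' ∧
      ∀ s > (0:ℝ), ∃ Nn : ℕ, ∀ n, Nn ≤ n → ∀ x,
        nd N2 γ (T n x - S x) ≤ s * dd N1 γ' x := by
    intro γ hγ
    obtain ⟨δ, hδ, hst, hγδ⟩ := hex γ hγ
    refine ⟨δ, hδ, hγδ.le, ?_⟩
    intro s hs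
    obtain ⟨Nn, hNn⟩ := hC2 δ hδ s hs
    refine ⟨Nn, fun n hn x => ?_⟩
    apply le_of_forall_pos_le_add
    intro ε hε
    have hev : ∀ᶠ m in atTop, nd N2 δ (T m x - S x) < ε / K :=
      (hconv x δ hδ).eventually (eventually_lt_nhds (by positivity))
    obtain ⟨m, hm1, hm2⟩ := ((eventually_ge_atTop Nn).and hev).exists
    obtain ⟨s0, hs00, hs0s, hs0b⟩ := hNn n m hn hm1
    have h1 : nd N2 δ ((T n - T m) x) ≤ s0 * dd N1 δ x := hs0b x
    rw [LinearMap.sub_apply] at h1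
    have h2 : T n x - S x = (T n x - T m x) + (T m x - S x) := by abel
    have h3 : nd N2 γ (T n x - S x) ≤
        nd N2 δ (T n x - T m x) + K * nd N2 δ (T m x - S x) := by
      rw [h2]; exact nd_add_le hN2 hδ.2 hst _ _
    have hdd0 := dd_nonneg' hN1 δ x
    have hKe : K * (ε / K) = ε := by field_simp
    nlinarith [hm2]
  -- S is fuzzy bounded
  have hFBS : FuzzyBounded N1 N2 K S := by
    intro α hα
    obtain ⟨δ, hδ, hst, hαδ⟩ := hex α hα
    obtain ⟨δ', hδ', hδδ', hUL1⟩ := hUL δ hδ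
    obtain ⟨Nn, hNn⟩ := hUL1 1 one_pos
    obtain ⟨M0, hM00, hb0⟩ := hTb Nn δ hδ
    refine ⟨1/K + K * M0 + 1, by positivity, fun x => ?_⟩
    apply le_of_forall_pos_le_add
    intro ε hε
    set ε1 : ℝ := ε / (1/K + K) with hε1
    have hε10 : 0 < ε1 := by positivity
    have hddδ' := dd_nonneg' hN1 δ' x
    have hddδ := dd_nonneg' hN1 δ x
    set t1 : ℝ := dd N1 δ' x + ε1 with ht1
    set t2 : ℝ := M0 * dd N1 δ x + ε1 with ht2
    have ht10 : 0 < t1 := by rw [ht1]; linarith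
    have ht20 : 0 < t2 := by rw [ht2]; nlinarith
    have hA0 : nd N2 δ (S x - T Nn x) ≤ dd N1 δ' x := by
      have h := hNn Nn le_rfl x
      rw [show S x - T Nn x = -(T Nn x - S x) from (neg_sub _ _).symm, nd_neg hN2]
      simpa using h
    have hAlt : δ < N2 (S x - T Nn x) t1 :=
      lt_of_nd_lt hN2 hδ.2 ht10 (by rw [ht1]; linarith)
    have hBne : {t | 0 < t ∧ δ ≤ N2 (T Nn x) (K * t)}.Nonempty := by
      obtain ⟨t, h1, h2⟩ := eeSet_nonempty hN2 hδ.2 (T Nn x)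
      exact ⟨t / K, by positivity, by rwa [mul_div_cancel₀ _ (ne_of_gt hK)]⟩
    have hlt : sInf {t | 0 < t ∧ δ ≤ N2 (T Nn x) (K * t)} < t2 := by
      have := hb0 x
      have hrfl : sInf {t | 0 < t ∧ 1 - δ ≤ N1 x t} = dd N1 δ x := rfl
      rw [hrfl] at this
      rw [ht2]; linarith
    obtain ⟨u, ⟨hu0, huδ⟩, hu2⟩ := exists_lt_of_csInf_lt hBne hlt
    have hB : δ ≤ N2 (T Nn x) (K * t2) :=
      le_trans huδ ((hN2.bN5 (T Nn x)).1 (mul_le_mul_of_nonneg_left hu2.le hK.le))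
    have hcomb : α ≤ N2 (S x) (t1 + K * (K * t2)) := by
      have h4 := hN2.bN4 (S x - T Nn x) (T Nn x) t1 (K * t2)
      have h5 : star2 δ δ ≤ star2 (N2 (S x - T Nn x) t1) (N2 (T Nn x) (K * t2)) :=
        hN2.tnorm.mono _ _ _ _ (le_of_lt hAlt) hB
      have h6 : S x - T Nn x + T Nn x = S x := by abel
      rw [h6] at h4
      linarith
    have hKτ : K * (t1 / K + K * t2) = t1 + K * (K * t2) := by field_simp
    have hmem : (t1 / K + K * t2) ∈ {t | 0 < t ∧ α ≤ N2 (S x) (K * t)} :=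
      ⟨by positivity, by rw [hKτ]; exact hcomb⟩
    have h7 : sInf {t | 0 < t ∧ α ≤ N2 (S x) (K * t)} ≤ t1 / K + K * t2 :=
      csInf_le ⟨0, fun _ hx => le_of_lt hx.1⟩ hmem
    have hd1 : dd N1 δ' x ≤ dd N1 α x := dd_anti hN1 hα.1 (le_trans hαδ.le hδδ') x
    have hd2 : dd N1 δ x ≤ dd N1 α x := dd_anti hN1 hα.1 hαδ.le x
    have hd0 : 0 ≤ dd N1 α x := dd_nonneg' hN1 _ _
    have hrfl2 : sInf {t | 0 < t ∧ 1 - α ≤ N1 x t} = dd N1 α x := rfl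
    rw [hrfl2]
    have he : ε1 * (1/K) + K * ε1 = ε := by
      rw [hε1]; field_simp
    have harith : t1 / K + K * t2 ≤ (1/K + K * M0 + 1) * dd N1 α x + ε := by
      rw [ht1, ht2]
      have e2 : (dd N1 δ' x + ε1) / K = dd N1 δ' x * (1/K) + ε1 * (1/K) := by
        field_simp
      rw [e2]
      have h8 : dd N1 δ' x * (1/K) ≤ dd N1 α x * (1/K) :=
        mul_le_mul_of_nonneg_right hd1 (by positivity)
      have h9 : K * (M0 * dd N1 δ x) ≤ K * (M0 * dd N1 α x) := by
        nlinarith [mul_le_mul_of_nonneg_left hd2 (mul_nonneg hK.le hM00.le)]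
      nlinarith
    linarith
  refine ⟨S, hFBS, ?_⟩
  intro α hα
  have hα' : (1 - α/2) ∈ Set.Ioo (0:ℝ) 1 := ⟨by linarith [hα.2], by linarith [hα.1]⟩
  obtain ⟨γ', hγ', hγγ', hUL2⟩ := hUL (1 - α/2) hα'
  rw [Metric.tendsto_nhds]
  intro ε hε
  obtain ⟨Nn, hNn⟩ := hUL2 (ε/2) (by positivity)
  rw [eventually_atTop]
  refine ⟨Nn, fun n hn => ?_⟩
  have hb : ∀ x, x ≠ 0 → ee N2 (1 - α/2) ((T n - S) x) ≤ (ε/2) * dd N1 (1 - α/2) x := by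
    intro x hx
    calc ee N2 (1 - α/2) ((T n - S) x) ≤ nd N2 (1 - α/2) ((T n - S) x) :=
      ee_le_nd hN2 le_rfl hα'.2 _
    _ = nd N2 (1 - α/2) (T n x - S x) := by rw [LinearMap.sub_apply]
    _ ≤ (ε/2) * dd N1 γ' x := hNn n hn x
    _ ≤ (ε/2) * dd N1 (1 - α/2) x :=
      mul_le_mul_of_nonneg_left (dd_anti hN1 hα'.1 hγγ' x) (by positivity)
  have hop : opSup N1 N2 (T n - S) (1 - α/2) ≤ ε/2 :=
    opSup_le hN1 hN2 hN6 hα' (by positivity) hb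
  have h2 : (1 - α/2 : ℝ) ≤ opN N1 N2 (T n - S) (ε/2) :=
    opN_ge hN1 hN2 hN6 hα' (show (0:ℝ) < ε/2 by positivity).ne' hop
  have hmem2 : (ε/2) ∈ {t | 0 < t ∧ 1 - α < opN N1 N2 (T n - S) t} :=
    ⟨by positivity, by linarith [hα.1]⟩
  have h3 : sInf {t | 0 < t ∧ 1 - α < opN N1 N2 (T n - S) t} ≤ ε/2 :=
    csInf_le ⟨0, fun _ hx => le_of_lt hx.1⟩ hmem2
  have h4 : (0:ℝ) ≤ sInf {t | 0 < t ∧ 1 - α < opN N1 N2 (T n - S) t} :=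
    Real.sInf_nonneg (fun _ hx => le_of_lt hx.1)
  rw [Real.dist_eq, sub_zero, abs_of_nonneg h4]
  linarith
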